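/- Let (E,ℒ) be a labeled graph satisfying the standing assumptions with ℰ the smallest normal accommodating set, and let {s_a, p_A} be a representation of (E,ℒ,ℰ) in a C*-algebra. Let [v]_l be a generalized vertex, A ∈ ℰ, and δ₁,…,δ_m ∈ ℒ*(E) paths such that s_{δ_i}* s_{δ_j} = 0 whenever i ≠ j and A ⊆ ∪_{i=1}^m r([v]_l, δ_i). Then there is a partial isometry w in the C*-algebra with w*w = p_A and ww* ≤ p_{[v]_l}. In particular, if p_A is an infinite projection then p_{[v]_l} is an infinite projection. -/
import Mathlib


/-- The `n`-fold concatenation (power) `w^n` of a finite word `w`. -/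
def wpow {Λ : Type*} (w : List Λ) (n : ℕ) : List Λ := (List.replicate n w).flatten

/-- The finite word `x_{[1,n]}` formed by the first `n` letters of an infinite word `x`. -/
def wordPrefix {Λ : Type*} (x : ℕ → Λ) (n : ℕ) : List Λ := (List.range n).map x

/-- A labeled graph `(E, ℒ)`: a directed graph with vertex set `V` and edge type `Edge`
(with range and source maps), together with a surjective labeling map `lbl` onto the
alphabet `Λ`. -/
structure LabeledGraph (V : Type*) (Λ : Type*) where
  Edge : Type*
  src : Edge → V
  rng : Edge → V
  lbl : Edge → Λ
  lbl_surjective : Function.Surjective lbl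

namespace LabeledGraph

variable {V : Type*} {Λ : Type*}

/-- `G.PathLabel u w α` holds iff there is a finite path `λ` of length `≥ 1` in the graph
with source `u`, range `w` and label word `ℒ(λ) = α`. -/
inductive PathLabel (G : LabeledGraph V Λ) : V → V → List Λ → Prop
  | single (e : G.Edge) : PathLabel G (G.src e) (G.rng e) [G.lbl e]
  | cons (e : G.Edge) {w : V} {α : List Λ} :
      PathLabel G (G.rng e) w α → PathLabel G (G.src e) w (G.lbl e :: α)

variable (G : LabeledGraph V Λ)

/-- `α ∈ ℒ*(E)`: `α` is the label of some path of length `≥ 1`. -/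
def IsLabel (α : List Λ) : Prop := ∃ u w, G.PathLabel u w α

/-- The relative range `r(A, α)` of `α` with respect to `A`. -/
def rel (A : Set V) (α : List Λ) : Set V := {w | ∃ u ∈ A, G.PathLabel u w α}

/-- `r(α) = r(E⁰, α)`. -/
def range' (α : List Λ) : Set V := G.rel Set.univ α

/-- `s(α)`: the set of sources of paths labeled `α`. -/
def srcSet (α : List Λ) : Set V := {u | ∃ w, G.PathLabel u w α}

/-- `ℒ(AEⁿ)`: labels of paths of length `n` with source in `A`. -/
def lblFrom (A : Set V) (n : ℕ) : Set (List Λ) :=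
  {α | α.length = n ∧ ∃ u ∈ A, ∃ w, G.PathLabel u w α}

/-- `ℒ(AE^{≥1})`: labels of paths of length `≥ 1` with source in `A`. -/
def lblFromGe (A : Set V) : Set (List Λ) := {α | ∃ u ∈ A, ∃ w, G.PathLabel u w α}

/-- `ℒ(EⁿA)`: labels of paths of length `n` with range in `A`. -/
def lblTo (A : Set V) (n : ℕ) : Set (List Λ) :=
  {α | α.length = n ∧ ∃ u, ∃ w ∈ A, G.PathLabel u w α}

/-- The generalized vertex `[v]_l`: the set of vertices `w` receiving at least one edge
such that `ℒ(E^k w) = ℒ(E^k v)` for all `1 ≤ k ≤ l`. -/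
def gv (v : V) (l : ℕ) : Set V :=
  {w | (∃ e : G.Edge, G.rng e = w) ∧
    ∀ k : ℕ, 1 ≤ k → k ≤ l → G.lblTo {w} k = G.lblTo {v} k}

/-- Membership in `ℰ`, the smallest collection of subsets of `E⁰` containing all ranges
`r(α)` and closed under relative ranges, finite intersections, finite unions and
relative complements (the smallest normal accommodating set). -/
inductive memE : Set V → Prop
  | empty : memE ∅
  | range (α : List Λ) : α ≠ [] → memE (G.range' α)
  | relRange {A : Set V} (α : List Λ) : α ≠ [] → memE A → memE (G.rel A α)
  | inter {A C : Set V} : memE A → memE C → memE (A ∩ C)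
  | union {A C : Set V} : memE A → memE C → memE (A ∪ C)
  | diff {A C : Set V} : memE A → memE C → memE (A \ C)

/-- The standing assumptions on the labeled space `(E, ℒ, ℰ)`: the graph has no sinks and
the labeled space is weakly left-resolving, set-finite and receiver set-finite. -/
structure Standing : Prop where
  no_sinks : ∀ u : V, ∃ e : G.Edge, G.src e = u
  weakly_left_resolving : ∀ A C : Set V, G.memE A → G.memE C →
    ∀ α : List Λ, α ≠ [] → G.rel (A ∩ C) α = G.rel A α ∩ G.rel C α
  set_finite : ∀ A : Set V, G.memE A → ∀ k : ℕ, 1 ≤ k → (G.lblFrom A k).Finite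
  receiver_set_finite : ∀ A : Set V, G.memE A → ∀ k : ℕ, 1 ≤ k → (G.lblTo A k).Finite

/-- `α` is agreeable for `[v]_l` (the condition only depends on `l`):
`α = βα' = α'γ` with `α', β, γ ∈ ℒ*(E)` and `|β| = |γ| ≤ l`. -/
def Agreeable (l : ℕ) (α : List Λ) : Prop :=
  ∃ α' β γ : List Λ, G.IsLabel α' ∧ G.IsLabel β ∧ G.IsLabel γ ∧
    β.length = γ.length ∧ β.length ≤ l ∧ α = β ++ α' ∧ α = α' ++ γ

/-- `α` (a path with `s(α) ∩ [v]_l ≠ ∅`) is disagreeable for `[v]_l`. -/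
def DisagreeableFor (v : V) (l : ℕ) (α : List Λ) : Prop :=
  (G.srcSet α ∩ G.gv v l).Nonempty ∧ ¬ G.Agreeable l α

/-- The generalized vertex `[v]_l` is disagreeable: there is `N ≥ 1` such that for every
`n > N` there is a path in `ℒ(E^{≥n})` which is disagreeable for `[v]_l`. -/
def DisagreeableGV (v : V) (l : ℕ) : Prop :=
  ∃ N : ℕ, 1 ≤ N ∧ ∀ n : ℕ, N < n →
    ∃ α : List Λ, n ≤ α.length ∧ G.DisagreeableFor v l α

/-- The labeled space `(E, ℒ, ℰ)` is disagreeable. -/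
def Disagreeable : Prop :=
  ∀ v : V, ∃ L : ℕ, 1 ≤ L ∧ ∀ l : ℕ, L ≤ l → G.DisagreeableGV v l

/-- `(α, A)` is a loop: `A ∈ ℰ` is nonempty, `α ∈ ℒ*(E)` and `A ⊆ r(A, α)`. -/
def IsLoop (α : List Λ) (A : Set V) : Prop :=
  α ≠ [] ∧ G.memE A ∧ A.Nonempty ∧ A ⊆ G.rel A α

/-- The loop `(α, A)` has an exit: either (i) there is `β ∈ ℒ(AE^{|α|})` with `β ≠ α` and
`r(A, β) ≠ ∅`, or (ii) `A ⊊ r(A, α)`. -/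
def HasExit (α : List Λ) (A : Set V) : Prop :=
  (∃ β : List Λ, β ∈ G.lblFrom A α.length ∧ β ≠ α ∧ (G.rel A β).Nonempty) ∨
    A ⊂ G.rel A α

/-- `A ∈ ℰ` is minimal: `A ≠ ∅` and `A ∩ C ∈ {A, ∅}` for every `C ∈ ℰ`. -/
def MinimalSet (A : Set V) : Prop :=
  G.memE A ∧ A.Nonempty ∧ ∀ C : Set V, G.memE C → A ∩ C = A ∨ A ∩ C = ∅

/-- A set `Bset ⊆ E⁰` connects to a loop: there are a loop `(α, A)` and finitely many
paths `δ₁, …, δ_m ∈ ℒ*(E)`, none of which is an initial path of another, with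
`A ⊆ ∪ᵢ r(Bset, δᵢ)`. -/
def ConnectsToLoop (Bset : Set V) : Prop :=
  ∃ (α : List Λ) (A : Set V), G.IsLoop α A ∧
    ∃ (m : ℕ) (δ : Fin m → List Λ), (∀ i, G.IsLabel (δ i)) ∧
      (∀ i j, i ≠ j → ¬ (δ i <+: δ j)) ∧ A ⊆ ⋃ i, G.rel Bset (δ i)

/-- Every vertex connects to a loop: every generalized vertex `[v]_l` connects to a loop. -/
def EveryVertexConnectsToLoop : Prop :=
  ∀ (v : V) (l : ℕ), 1 ≤ l → (∃ e : G.Edge, G.rng e = v) →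
    G.ConnectsToLoop (G.gv v l)

/-- The labeled space `(E, ℒ, ℰ)` is strongly cofinal. -/
def StronglyCofinal : Prop :=
  ∀ x : ℕ → Λ, (∀ n : ℕ, 1 ≤ n → G.IsLabel (wordPrefix x n)) →
    ∀ (v : V) (l : ℕ), (∃ e : G.Edge, G.rng e = v) → 1 ≤ l →
      ∃ N : ℕ, 1 ≤ N ∧ ∃ (m : ℕ) (lam : Fin m → List Λ),
        (∀ i, G.IsLabel (lam i)) ∧
        G.range' (wordPrefix x N) ⊆ ⋃ i, G.rel (G.gv v l) (lam i)

/-- A subset `H ⊆ ℰ` is hereditary: it is closed under finite unions, relative ranges,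
and subsets belonging to `ℰ`. -/
def IsHereditary (H : Set (Set V)) : Prop :=
  (∀ A ∈ H, G.memE A) ∧
  (∀ A ∈ H, ∀ C ∈ H, A ∪ C ∈ H) ∧
  (∀ A ∈ H, ∀ β : List Λ, G.IsLabel β → G.rel A β ∈ H) ∧
  (∀ A ∈ H, ∀ C : Set V, G.memE C → C ⊆ A → C ∈ H)

/-- A subset `H ⊆ ℰ` is saturated: every `A ∈ ℰ` with `r(A, β) ∈ H` for all
`β ∈ ℒ*(E)` belongs to `H`. -/
def IsSaturated (H : Set (Set V)) : Prop :=
  ∀ A : Set V, G.memE A → (∀ β : List Λ, G.IsLabel β → G.rel A β ∈ H) → A ∈ H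

end LabeledGraph

namespace LabeledGraph

variable {V : Type*} {Λ : Type*}

/-- A representation of the labeled space `(E, ℒ, ℰ)` in a C*-algebra `B`: a family of
projections `p A` (for `A ∈ ℰ`) and partial isometries `s a` (for letters `a`)
satisfying the defining relations (i)–(iv). -/
structure Representation (G : LabeledGraph V Λ) (B : Type*)
    [NonUnitalCStarAlgebra B] where
  p : Set V → B
  s : Λ → B
  p_selfAdjoint : ∀ A : Set V, G.memE A → IsSelfAdjoint (p A)
  p_idem : ∀ A : Set V, G.memE A → p A * p A = p A
  p_empty : p ∅ = 0
  p_inter : ∀ A C : Set V, G.memE A → G.memE C → p (A ∩ C) = p A * p C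
  p_union : ∀ A C : Set V, G.memE A → G.memE C →
    p (A ∪ C) = p A + p C - p (A ∩ C)
  p_mul_s : ∀ A : Set V, G.memE A → ∀ a : Λ, p A * s a = s a * p (G.rel A [a])
  star_s_mul_s : ∀ a : Λ, star (s a) * s a = p (G.range' [a])
  star_s_mul_s_orth : ∀ a b : Λ, a ≠ b → star (s a) * s b = 0
  cuntz_krieger : ∀ A : Set V, G.memE A → ∀ F : Finset Λ,
    (F : Set Λ) = {a : Λ | [a] ∈ G.lblFrom A 1} →
    p A = ∑ a ∈ F, s a * p (G.rel A [a]) * star (s a)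

/-- `s_α = s_{a₁} ⋯ s_{aₙ}` for a word `α = a₁ ⋯ aₙ` (defined as `0` on the empty word). -/
def Representation.sWord {G : LabeledGraph V Λ} {B : Type*} [NonUnitalCStarAlgebra B]
    (ρ : Representation G B) : List Λ → B
  | [] => 0
  | [a] => ρ.s a
  | a :: b :: α => ρ.s a * Representation.sWord ρ (b :: α)

/-- A gauge action for a representation: a point-norm continuous action of the circle
group `𝕋` by *-automorphisms fixing the projections `p A` and multiplying each `s a`
by the corresponding scalar. -/
structure Representation.GaugeAction {G : LabeledGraph V Λ} {B : Type*} [NonUnitalCStarAlgebra B]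
    (ρ : Representation G B) where
  γ : Circle → B ≃⋆ₐ[ℂ] B
  γ_mul : ∀ z w : Circle, γ (z * w) = (γ w).trans (γ z)
  γ_continuous : ∀ b : B, Continuous fun z : Circle => γ z b
  γ_s : ∀ (z : Circle) (a : Λ), γ z (ρ.s a) = (z : ℂ) • ρ.s a
  γ_p : ∀ (z : Circle) (A : Set V), G.memE A → γ z (ρ.p A) = ρ.p A

end LabeledGraph

/-- A projection in a C*-algebra. -/
def IsProjectionElem {B : Type*} [NonUnitalCStarAlgebra B] (q : B) : Prop :=
  IsSelfAdjoint q ∧ q * q = q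

/-- Murray–von Neumann equivalence of projections: `q = w* w` and `r = w w*` for some `w`. -/
def MvNEquiv {B : Type*} [NonUnitalCStarAlgebra B] (q r : B) : Prop :=
  ∃ w : B, star w * w = q ∧ w * star w = r

/-- An infinite projection: a projection `q` such that `w* w = q`, `w w* ≤ q` and
`w w* ≠ q` for some `w`. -/
def IsInfiniteProjection {B : Type*} [NonUnitalCStarAlgebra B] [PartialOrder B]
    [StarOrderedRing B] (q : B) : Prop :=
  IsProjectionElem q ∧ ∃ w : B, star w * w = q ∧ w * star w ≤ q ∧ w * star w ≠ q


/-! ### Auxiliary C*-algebra lemmas -/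

section CStarLemmas

variable {B : Type*} [NonUnitalCStarAlgebra B]

lemma isometry_triple (x : B) (h : (star x * x) * (star x * x) = star x * x) :
    x * (star x * x) = x := by
  have hps : star (star x * x) = star x * x := by simp [star_mul]
  have key : star (x * (star x * x) - x) * (x * (star x * x) - x) = 0 := by
    rw [star_sub, star_mul, hps]
    have expand : (star x * x * star x - star x) * (x * (star x * x) - x)
        = (star x * x) * ((star x * x) * (star x * x)) - (star x * x) * (star x * x)
          - (star x * x) * (star x * x) + star x * x := by
      simp only [mul_sub, sub_mul, mul_assoc]
      abel
    rw [expand, h, h]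
    abel
  exact sub_eq_zero.mp ((CStarRing.star_mul_self_eq_zero_iff _).mp key)

lemma IsProjectionElem.mul_star' {x : B} (h : IsProjectionElem (star x * x)) :
    IsProjectionElem (x * star x) := by
  have ht := isometry_triple x h.2
  refine ⟨by simp [IsSelfAdjoint, star_mul], ?_⟩
  calc x * star x * (x * star x) = (x * (star x * x)) * star x := by
        simp only [mul_assoc]
    _ = x * star x := by rw [ht]

variable [PartialOrder B] [StarOrderedRing B]

lemma proj_absorb {e f : B} (he : IsProjectionElem e) (hf : IsProjectionElem f)
    (hle : e ≤ f) : e * f = e ∧ f * e = e := by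
  have hes : star e = e := he.1
  have hfs : star f = f := hf.1
  have h1 : e ≤ e * f * e := by
    have h2 := star_left_conjugate_le_conjugate hle e
    rw [hes] at h2
    calc e = e * e * e := by rw [he.2, he.2]
      _ ≤ e * f * e := h2
  have hle0 : (e - e * f) * star (e - e * f) ≤ 0 := by
    have expand : (e - e * f) * star (e - e * f) = e - e * f * e := by
      rw [star_sub, star_mul, hes, hfs]
      calc (e - e * f) * (e - f * e)
          = e * e - e * (f * e) - e * (f * e) + e * (f * (f * e)) := by
            simp only [mul_sub, sub_mul, mul_assoc]; abel
        _ = e - e * f * e := by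
            rw [show f * (f * e) = f * e by rw [← mul_assoc, hf.2], he.2]
            simp only [mul_assoc]; abel
    rw [expand]
    exact sub_nonpos.mpr h1
  have hge0 : 0 ≤ (e - e * f) * star (e - e * f) := by
    simpa using star_mul_self_nonneg (star (e - e * f))
  have hz : star (star (e - e * f)) * star (e - e * f) = 0 := by
    rw [star_star]; exact le_antisymm hle0 hge0
  have hy : e - e * f = 0 := by
    have := (CStarRing.star_mul_self_eq_zero_iff (star (e - e * f))).mp hz
    simpa using congrArg star this
  have hef : e * f = e := by
    have := sub_eq_zero.mp hy; exact this.symm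
  refine ⟨hef, ?_⟩
  calc f * e = star (e * f) := by rw [star_mul, hes, hfs]
    _ = e := by rw [hef, hes]

lemma infinite_of_mvn {p q x : B} (hp : IsInfiniteProjection p)
    (hx : star x * x = p) (hq : x * star x = q) : IsInfiniteProjection q := by
  obtain ⟨hpp, u, hu1, hu2, hu3⟩ := hp
  have hxx_proj : IsProjectionElem (star x * x) := by rw [hx]; exact hpp
  have htx : x * (star x * x) = x := isometry_triple x (by rw [hx]; exact hpp.2)
  have hxp : x * p = x := by rw [← hx]; exact htx
  have hpxs : p * star x = star x := by
    have := congrArg star hxp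
    rwa [star_mul, hpp.1] at this
  have hqproj : IsProjectionElem q := by rw [← hq]; exact hxx_proj.mul_star'
  have huu_proj : IsProjectionElem (star u * u) := by rw [hu1]; exact hpp
  have huus : IsProjectionElem (u * star u) := huu_proj.mul_star'
  have htu : u * (star u * u) = u := isometry_triple u (by rw [hu1]; exact hpp.2)
  have hup : u * p = u := by rw [← hu1]; exact htu
  have hpus : p * star u = star u := by
    have := congrArg star hup
    rwa [star_mul, hpp.1] at this
  obtain ⟨habs1, habs2⟩ := proj_absorb huus hpp hu2
  have huu_u : u * star u * u = u := by rw [mul_assoc]; exact htu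
  have hpu : p * u = u := by
    calc p * u = p * (u * star u * u) := by rw [huu_u]
      _ = p * (u * star u) * u := by simp only [mul_assoc]
      _ = u * star u * u := by rw [habs2]
      _ = u := huu_u
  have hus_p : star u * p = star u := by
    have := congrArg star hpu
    rwa [star_mul, hpp.1] at this
  -- the witness
  set s := x * u * star x with hs
  have hss : star s * s = q := by
    rw [hs]
    calc star (x * u * star x) * (x * u * star x)
        = x * (star u * ((star x * x) * u)) * star x := by
          simp only [star_mul, star_star, mul_assoc]
      _ = x * (star u * u) * star x := by rw [hx, hpu]
      _ = x * p * star x := by rw [hu1]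
      _ = x * star x := by rw [hxp]
      _ = q := hq
  have hssr : s * star s = x * (u * star u) * star x := by
    rw [hs]
    calc (x * u * star x) * star (x * u * star x)
        = x * (u * ((star x * x) * star u)) * star x := by
          simp only [star_mul, star_star, mul_assoc]
      _ = x * (u * (p * star u)) * star x := by rw [hx]
      _ = x * (u * star u) * star x := by rw [hpus, mul_assoc]
  refine ⟨hqproj, s, hss, ?_, ?_⟩
  · have h0 : 0 ≤ star (star x) * (p - u * star u) * star x :=
      star_left_conjugate_nonneg (sub_nonneg.mpr hu2) (star x)
    rw [star_star] at h0
    have : q - s * star s = x * (p - u * star u) * star x := by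
      rw [hssr, ← hq]
      calc x * star x - x * (u * star u) * star x
          = x * p * star x - x * (u * star u) * star x := by rw [hxp]
        _ = x * (p - u * star u) * star x := by
            simp only [mul_sub, sub_mul]
      -- done
    rw [← sub_nonneg, this]
    exact h0
  · intro hcon
    apply hu3
    have hkey : star x * (s * star s) * x = u * star u := by
      rw [hssr]
      calc star x * (x * (u * star u) * star x) * x
          = (star x * x) * (u * star u) * (star x * x) := by
            simp only [mul_assoc]
        _ = p * (u * star u) * p := by rw [hx]
        _ = u * star u := by rw [habs2, habs1]
    have hkey2 : star x * q * x = p := by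
      rw [← hq]
      calc star x * (x * star x) * x = (star x * x) * (star x * x) := by
            simp only [mul_assoc]
        _ = p := by rw [hx, hpp.2]
    rw [← hkey, hcon, hkey2]

lemma infinite_of_le {q P : B} (hq : IsInfiniteProjection q) (hP : IsProjectionElem P)
    (hle : q ≤ P) : IsInfiniteProjection P := by
  obtain ⟨hqp, u, hu1, hu2, hu3⟩ := hq
  obtain ⟨hqP, hPq⟩ := proj_absorb hqp hP hle
  have huu_proj : IsProjectionElem (u * star u) :=
    IsProjectionElem.mul_star' (by rw [hu1]; exact hqp)
  have htu : u * (star u * u) = u := isometry_triple u (by rw [hu1]; exact hqp.2)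
  have huq : u * q = u := by rw [← hu1]; exact htu
  have hqus : q * star u = star u := by
    have := congrArg star huq; rwa [star_mul, hqp.1] at this
  obtain ⟨huuq1, huuq2⟩ := proj_absorb huu_proj hqp hu2
  have huuP_le : u * star u ≤ P := le_trans hu2 hle
  obtain ⟨huuP1, huuP2⟩ := proj_absorb huu_proj hP huuP_le
  have huu_u : u * star u * u = u := by rw [mul_assoc]; exact htu
  have hqu : q * u = u := by
    calc q * u = q * (u * star u * u) := by rw [huu_u]
      _ = q * (u * star u) * u := by simp only [mul_assoc]
      _ = u * star u * u := by rw [huuq2]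
      _ = u := huu_u
  have hus_q : star u * q = star u := by
    have := congrArg star hqu; rwa [star_mul, hqp.1] at this
  have huP : u * P = u := by rw [← huq, mul_assoc, hqP]
  have hPu : P * u = u := by rw [← hqu, ← mul_assoc, hPq]
  have hus_P : star u * P = star u := by
    have := congrArg star hPu; rwa [star_mul, hP.1] at this
  have hP_us : P * star u = star u := by
    have := congrArg star huP; rwa [star_mul, hP.1] at this
  have hq_us : q * star u = star u := hqus
  set t := u + (P - q) with ht
  have hst : star t = star u + (P - q) := by
    rw [ht, star_add, star_sub, hP.1, hqp.1]
  have hPq2 : (P - q) * (P - q) = P - q := by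
    simp only [mul_sub, sub_mul, hP.2, hqp.2, hqP, hPq]
    abel
  have htt : star t * t = P := by
    rw [hst, ht, add_mul, mul_add, mul_add]
    rw [hu1, hPq2]
    rw [mul_sub, hus_P, hus_q, sub_self, sub_mul, hPu, hqu, sub_self]
    abel
  have htts : t * star t = u * star u + (P - q) := by
    rw [hst, ht, add_mul, mul_add, mul_add]
    rw [hPq2]
    rw [mul_sub, huP, huq, sub_self, sub_mul, hP_us, hq_us, sub_self]
    abel
  refine ⟨hP, t, htt, ?_, ?_⟩
  · rw [← sub_nonneg, htts,
      show P - (u * star u + (P - q)) = q - u * star u from by abel]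
    exact sub_nonneg.mpr hu2
  · rw [htts]
    intro hcon
    apply hu3
    have h := congrArg (· - (P - q)) hcon
    simp only [add_sub_cancel_right, sub_sub_cancel] at h
    exact h

end CStarLemmas

/-! ### Auxiliary labeled-graph lemmas -/

namespace LabeledGraph

variable {V : Type*} {Λ : Type*} (G : LabeledGraph V Λ)

lemma PathLabel.ne_nil {u w : V} {α : List Λ} (h : G.PathLabel u w α) : α ≠ [] := by
  cases h <;> simp

lemma IsLabel.ne_nil {α : List Λ} (h : G.IsLabel α) : α ≠ [] := by
  obtain ⟨u, w, h⟩ := h; exact h.ne_nil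

lemma PathLabel.exists_rng {u w : V} {α : List Λ} (h : G.PathLabel u w α) :
    ∃ e : G.Edge, G.rng e = w := by
  induction h with
  | single e => exact ⟨e, rfl⟩
  | cons e _ ih => exact ih

lemma rel_cons {A : Set V} {a : Λ} {β : List Λ} (hβ : β ≠ []) :
    G.rel A (a :: β) = G.rel (G.rel A [a]) β := by
  ext w
  constructor
  · rintro ⟨u, hu, h⟩
    cases h with
    | single e => exact absurd rfl hβ
    | cons e h' => exact ⟨G.rng e, ⟨G.src e, hu, PathLabel.single e⟩, h'⟩
  · rintro ⟨u', ⟨u, hu, h1⟩, h2⟩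
    cases h1 with
    | single e => exact ⟨_, hu, PathLabel.cons e h2⟩
    | cons e h' => exact absurd rfl h'.ne_nil

lemma rel_mono {A C : Set V} (h : A ⊆ C) (α : List Λ) : G.rel A α ⊆ G.rel C α := by
  rintro w ⟨u, hu, hp⟩; exact ⟨u, h hu, hp⟩

lemma rel_subset_range' (A : Set V) (α : List Λ) : G.rel A α ⊆ G.range' α :=
  G.rel_mono (Set.subset_univ A) α

lemma range'_cons {a : Λ} {β : List Λ} (hβ : β ≠ []) :
    G.range' (a :: β) = G.rel (G.range' [a]) β :=
  G.rel_cons hβ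

theorem p_mul_sWord {B : Type*} [NonUnitalCStarAlgebra B] (ρ : G.Representation B) :
    ∀ (α : List Λ), α ≠ [] → ∀ (A : Set V), G.memE A →
      ρ.p A * ρ.sWord α = ρ.sWord α * ρ.p (G.rel A α)
  | [], h, _, _ => absurd rfl h
  | [a], _, A, hA => ρ.p_mul_s A hA a
  | a :: b :: t, _, A, hA => by
    have hbt : (b :: t : List Λ) ≠ [] := by simp
    have hArel : G.memE (G.rel A [a]) := memE.relRange [a] (by simp) hA
    have ih := p_mul_sWord ρ (b :: t) hbt (G.rel A [a]) hArel
    show ρ.p A * (ρ.s a * ρ.sWord (b :: t)) = (ρ.s a * ρ.sWord (b :: t)) * _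
    calc ρ.p A * (ρ.s a * ρ.sWord (b :: t))
        = (ρ.p A * ρ.s a) * ρ.sWord (b :: t) := by rw [mul_assoc]
      _ = ρ.s a * (ρ.p (G.rel A [a]) * ρ.sWord (b :: t)) := by
          rw [ρ.p_mul_s A hA a, mul_assoc]
      _ = ρ.s a * (ρ.sWord (b :: t) * ρ.p (G.rel (G.rel A [a]) (b :: t))) := by rw [ih]
      _ = (ρ.s a * ρ.sWord (b :: t)) * ρ.p (G.rel A (a :: b :: t)) := by
          rw [G.rel_cons hbt, mul_assoc]

theorem star_sWord_mul {B : Type*} [NonUnitalCStarAlgebra B] (ρ : G.Representation B) :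
    ∀ (α : List Λ), α ≠ [] → star (ρ.sWord α) * ρ.sWord α = ρ.p (G.range' α)
  | [], h => absurd rfl h
  | [a], _ => ρ.star_s_mul_s a
  | a :: b :: t, _ => by
    have ih := star_sWord_mul ρ (b :: t) (by simp)
    have hbt : (b :: t : List Λ) ≠ [] := by simp
    have hmema : G.memE (G.range' [a]) := memE.range [a] (by simp)
    have h1 : G.memE (G.range' (b :: t)) := memE.range _ hbt
    have h2 : G.memE (G.rel (G.range' [a]) (b :: t)) := memE.relRange _ hbt hmema
    have hsub : G.rel (G.range' [a]) (b :: t) ⊆ G.range' (b :: t) := G.rel_subset_range' _ _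
    show star (ρ.s a * ρ.sWord (b :: t)) * (ρ.s a * ρ.sWord (b :: t)) = _
    calc star (ρ.s a * ρ.sWord (b :: t)) * (ρ.s a * ρ.sWord (b :: t))
        = star (ρ.sWord (b :: t)) * ((star (ρ.s a) * ρ.s a) * ρ.sWord (b :: t)) := by
          simp only [star_mul, mul_assoc]
      _ = star (ρ.sWord (b :: t)) * (ρ.p (G.range' [a]) * ρ.sWord (b :: t)) := by
          rw [ρ.star_s_mul_s a]
      _ = star (ρ.sWord (b :: t)) *
            (ρ.sWord (b :: t) * ρ.p (G.rel (G.range' [a]) (b :: t))) := by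
          rw [p_mul_sWord G ρ (b :: t) hbt _ hmema]
      _ = ρ.p (G.range' (b :: t)) * ρ.p (G.rel (G.range' [a]) (b :: t)) := by
          rw [← mul_assoc, ih]
      _ = ρ.p (G.range' (b :: t) ∩ G.rel (G.range' [a]) (b :: t)) :=
          (ρ.p_inter _ _ h1 h2).symm
      _ = ρ.p (G.range' (a :: b :: t)) := by
          rw [Set.inter_eq_self_of_subset_right hsub, ← G.range'_cons hbt]

lemma memE_finsetBiUnion {ι : Type*} (T : Finset ι) (f : ι → Set V)
    (h : ∀ i ∈ T, G.memE (f i)) : G.memE (⋃ i ∈ T, f i) := by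
  classical
  induction T using Finset.induction_on with
  | empty => simpa using memE.empty (G := G)
  | @insert a T ha ih =>
    rw [Finset.set_biUnion_insert]
    exact (h a (Finset.mem_insert_self a T)).union
      (ih fun i hi => h i (Finset.mem_insert_of_mem hi))

lemma memE_finsetBiInter {ι : Type*} (T : Finset ι) (f : ι → Set V)
    (hT : T.Nonempty) (h : ∀ i ∈ T, G.memE (f i)) : G.memE (⋂ i ∈ T, f i) := by
  classical
  induction T using Finset.induction_on with
  | empty => exact absurd hT (by simp)
  | @insert a T ha ih =>
    rcases T.eq_empty_or_nonempty with rfl | hne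
    · simpa using h a (Finset.mem_insert_self a ∅)
    · rw [Finset.set_biInter_insert]
      exact (h a (Finset.mem_insert_self a T)).inter
        (ih hne fun i hi => h i (Finset.mem_insert_of_mem hi))

lemma iUnion_fin_succ {α : Type*} {n : ℕ} (D : Fin (n + 1) → Set α) :
    (⋃ i, D i) = (⋃ i : Fin n, D i.castSucc) ∪ D (Fin.last n) := by
  ext x
  simp only [Set.mem_iUnion, Set.mem_union]
  constructor
  · rintro ⟨i, hi⟩
    rcases eq_or_ne i (Fin.last n) with rfl | h
    · exact Or.inr hi
    · exact Or.inl ⟨i.castPred h, by rwa [Fin.castSucc_castPred]⟩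
  · rintro (⟨i, hi⟩ | h)
    · exact ⟨_, hi⟩
    · exact ⟨_, h⟩

lemma memE_iUnion_fin {m : ℕ} (D : Fin m → Set V) (h : ∀ i, G.memE (D i)) :
    G.memE (⋃ i, D i) := by
  induction m with
  | zero => simpa [Set.iUnion_of_empty] using memE.empty (G := G)
  | succ n ih =>
    rw [iUnion_fin_succ]
    exact (ih _ (fun i => h i.castSucc)).union (h (Fin.last n))

end LabeledGraph

namespace LabeledGraph

variable {V : Type*} {Λ : Type*} (G : LabeledGraph V Λ)

/-- Generalized vertices belong to `ℰ`. -/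
lemma memE_gv (hS : G.Standing) (v : V) (hv : ∃ e : G.Edge, G.rng e = v)
    (l : ℕ) (hl : 1 ≤ l) : G.memE (G.gv v l) := by
  classical
  obtain ⟨e₀, he₀⟩ := hv
  set a₀ := G.lbl e₀ with ha₀
  have hpa₀ : G.PathLabel (G.src e₀) v [a₀] := by
    rw [← he₀]; exact PathLabel.single e₀
  have hvmem : v ∈ G.range' [a₀] := ⟨G.src e₀, Set.mem_univ _, hpa₀⟩
  have hmemr : G.memE (G.range' [a₀]) := memE.range [a₀] (by simp)
  have hfinv : ∀ k : ℕ, 1 ≤ k → (G.lblTo {v} k).Finite := by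
    intro k hk
    refine (hS.receiver_set_finite _ hmemr k hk).subset ?_
    rintro β ⟨hlen, u, w', hw', hp⟩
    rw [Set.mem_singleton_iff] at hw'
    exact ⟨hlen, u, w', by rw [hw']; exact hvmem, hp⟩
  have hSfin : {q : ℕ × List Λ | q.1 ∈ Finset.Icc 1 l ∧ q.2 ∈ G.lblTo {v} q.1}.Finite := by
    refine Set.Finite.subset (Set.Finite.biUnion (Finset.Icc 1 l).finite_toSet
      (fun k hk => (Set.finite_singleton k).prod (hfinv k (Finset.mem_Icc.mp hk).1))) ?_
    rintro ⟨k, β⟩ ⟨hk, hβ⟩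
    exact Set.mem_biUnion hk ⟨rfl, hβ⟩
  set T := hSfin.toFinset with hT
  have hmemT : ∀ q ∈ T, 1 ≤ q.1 ∧ q.1 ≤ l ∧ q.2 ∈ G.lblTo {v} q.1 := by
    intro q hq
    rw [hT, Set.Finite.mem_toFinset] at hq
    obtain ⟨hk, hβ⟩ := hq
    rw [Finset.mem_Icc] at hk
    exact ⟨hk.1, hk.2, hβ⟩
  have hT1 : ((1 : ℕ), [a₀]) ∈ T := by
    rw [hT, Set.Finite.mem_toFinset]
    exact ⟨Finset.mem_Icc.mpr ⟨le_refl 1, hl⟩, rfl, G.src e₀, v, rfl, hpa₀⟩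
  set B₀ : Set V := ⋂ q ∈ T, G.range' q.2 with hB₀
  have hqne : ∀ q ∈ T, (q.2 : List Λ) ≠ [] := by
    intro q hq hnil
    obtain ⟨h1, _, hβ⟩ := hmemT q hq
    rw [hnil] at hβ
    obtain ⟨hlen, -⟩ := hβ
    simp at hlen
    omega
  have hB₀E : G.memE B₀ :=
    G.memE_finsetBiInter T (fun q => G.range' q.2) ⟨(1, [a₀]), hT1⟩
      (fun q hq => memE.range q.2 (hqne q hq))
  have hS'fin : {q : ℕ × List Λ | q.1 ∈ Finset.Icc 1 l ∧ q.2 ∈ G.lblTo B₀ q.1 ∧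
      q.2 ∉ G.lblTo {v} q.1}.Finite := by
    refine Set.Finite.subset (Set.Finite.biUnion (Finset.Icc 1 l).finite_toSet
      (fun k hk => (Set.finite_singleton k).prod
        (hS.receiver_set_finite B₀ hB₀E k (Finset.mem_Icc.mp hk).1))) ?_
    rintro ⟨k, β⟩ ⟨hk, hβ, -⟩
    exact Set.mem_biUnion hk ⟨rfl, hβ⟩
  set T' := hS'fin.toFinset with hT'
  have hmemT' : ∀ q ∈ T', 1 ≤ q.1 ∧ q.1 ≤ l ∧ q.2 ∈ G.lblTo B₀ q.1 ∧
      q.2 ∉ G.lblTo {v} q.1 := by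
    intro q hq
    rw [hT', Set.Finite.mem_toFinset] at hq
    obtain ⟨hk, h2, h3⟩ := hq
    rw [Finset.mem_Icc] at hk
    exact ⟨hk.1, hk.2, h2, h3⟩
  set C : Set V := ⋃ q ∈ T', G.range' q.2 with hC
  have hCE : G.memE C := by
    refine G.memE_finsetBiUnion T' (fun q => G.range' q.2) (fun q hq => memE.range q.2 ?_)
    obtain ⟨h1, -, hβ, -⟩ := hmemT' q hq
    intro hnil
    rw [hnil] at hβ
    obtain ⟨hlen, -⟩ := hβ
    simp at hlen
    omega
  have hEq : G.gv v l = B₀ \ C := by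
    ext w
    constructor
    · rintro ⟨⟨e, he⟩, hlbl⟩
      constructor
      · refine Set.mem_iInter₂.mpr ?_
        intro q hq
        obtain ⟨h1, h2, hβ⟩ := hmemT q hq
        have hβw : q.2 ∈ G.lblTo {w} q.1 := by rw [hlbl q.1 h1 h2]; exact hβ
        obtain ⟨hlen, u, w', hw', hp⟩ := hβw
        rw [Set.mem_singleton_iff] at hw'
        exact ⟨u, Set.mem_univ u, hw' ▸ hp⟩
      · intro hwC
        obtain ⟨q, hq, hwq⟩ := Set.mem_iUnion₂.mp hwC
        obtain ⟨h1, h2, hβB, hβv⟩ := hmemT' q hq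
        obtain ⟨u, -, hp⟩ := hwq
        apply hβv
        rw [← hlbl q.1 h1 h2]
        obtain ⟨hlen, -⟩ := hβB
        exact ⟨hlen, u, w, rfl, hp⟩
    · rintro ⟨hwB, hwC⟩
      have hrange : ∀ q ∈ T, w ∈ G.range' q.2 := fun q hq => Set.mem_iInter₂.mp hwB q hq
      constructor
      · obtain ⟨u, -, hp⟩ := hrange (1, [a₀]) hT1
        exact hp.exists_rng
      · intro k hk1 hk2
        ext β
        constructor
        · rintro ⟨hlen, u, w', hw', hp⟩
          rw [Set.mem_singleton_iff] at hw'
          subst hw'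
          by_contra hβv
          have hq' : ((k : ℕ), β) ∈ T' := by
            rw [hT', Set.Finite.mem_toFinset]
            exact ⟨Finset.mem_Icc.mpr ⟨hk1, hk2⟩, ⟨hlen, u, w', hwB, hp⟩, hβv⟩
          exact hwC (Set.mem_iUnion₂.mpr ⟨(k, β), hq', ⟨u, Set.mem_univ u, hp⟩⟩)
        · intro hβv
          have hq : ((k : ℕ), β) ∈ T := by
            rw [hT, Set.Finite.mem_toFinset]
            exact ⟨Finset.mem_Icc.mpr ⟨hk1, hk2⟩, hβv⟩
          obtain ⟨u, -, hp⟩ := hrange (k, β) hq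
          obtain ⟨hlen, -⟩ := hβv
          exact ⟨hlen, u, w, rfl, hp⟩
  rw [hEq]
  exact hB₀E.diff hCE

/-- `p` of a finite disjoint union is the sum of the projections. -/
theorem p_iUnion_disjoint {B : Type*} [NonUnitalCStarAlgebra B] (ρ : G.Representation B) :
    ∀ {m : ℕ} (D : Fin m → Set V), (∀ i, G.memE (D i)) →
      (∀ i j, i ≠ j → D i ∩ D j = ∅) → ρ.p (⋃ i, D i) = ∑ i, ρ.p (D i) := by
  intro m
  induction m with
  | zero =>
    intro D _ _
    simp [Set.iUnion_of_empty, ρ.p_empty]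
  | succ n ih =>
    intro D hDE hdisj
    have hcast : ∀ i j : Fin n, i ≠ j → D i.castSucc ∩ D j.castSucc = ∅ := fun i j hij =>
      hdisj _ _ (by simpa [Fin.castSucc_inj] using hij)
    have hXE : G.memE (⋃ i : Fin n, D i.castSucc) :=
      G.memE_iUnion_fin _ (fun i => hDE _)
    have hinter : (⋃ i : Fin n, D i.castSucc) ∩ D (Fin.last n) = ∅ := by
      rw [Set.iUnion_inter]
      exact Set.iUnion_eq_empty.mpr fun i => hdisj _ _ (Fin.castSucc_lt_last i).ne
    rw [iUnion_fin_succ D, ρ.p_union _ _ hXE (hDE _), hinter, ρ.p_empty,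
      ih _ (fun i => hDE _) hcast, Fin.sum_univ_castSucc]
    abel

end LabeledGraph

/-- Let `{s_a, p_A}` be a representation of `(E, ℒ, ℰ)` in a C*-algebra, `[v]_l` a
generalized vertex, `A ∈ ℰ`, and `δ₁, …, δ_m ∈ ℒ*(E)` with `s_{δ_i}* s_{δ_j} = 0` for
`i ≠ j` and `A ⊆ ∪ᵢ r([v]_l, δᵢ)`. Then there is a partial isometry `w` with
`w* w = p_A` and `w w* ≤ p_{[v]_l}`; in particular, if `p_A` is an infinite projection
then so is `p_{[v]_l}`. -/
theorem stmt_7 {V : Type*} {Λ : Type*} [Countable V] [Countable Λ]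
    (G : LabeledGraph V Λ) [Countable G.Edge] (hS : G.Standing)
    {B : Type*} [NonUnitalCStarAlgebra B] [PartialOrder B] [StarOrderedRing B]
    (ρ : G.Representation B)
    (v : V) (hv : ∃ e : G.Edge, G.rng e = v) (l : ℕ) (hl : 1 ≤ l)
    (A : Set V) (hA : G.memE A)
    (m : ℕ) (δ : Fin m → List Λ) (hδ : ∀ i, G.IsLabel (δ i))
    (horth : ∀ i j, i ≠ j → star (ρ.sWord (δ i)) * ρ.sWord (δ j) = 0)
    (hcover : A ⊆ ⋃ i, G.rel (G.gv v l) (δ i)) :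
    (∃ w : B, star w * w = ρ.p A ∧ w * star w ≤ ρ.p (G.gv v l)) ∧
    (IsInfiniteProjection (ρ.p A) → IsInfiniteProjection (ρ.p (G.gv v l))) := by
  classical
  have hg : G.memE (G.gv v l) := G.memE_gv hS v hv l hl
  set g := G.gv v l with hgdef
  have hδne : ∀ i, δ i ≠ [] := fun i => (hδ i).ne_nil
  have pproj : ∀ (X : Set V), G.memE X → IsProjectionElem (ρ.p X) := fun X hX =>
    ⟨ρ.p_selfAdjoint X hX, ρ.p_idem X hX⟩
  have pabsorb : ∀ (X Y : Set V), G.memE X → G.memE Y → X ⊆ Y →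
      ρ.p X * ρ.p Y = ρ.p X ∧ ρ.p Y * ρ.p X = ρ.p X := by
    intro X Y hX hY hXY
    constructor
    · rw [← ρ.p_inter X Y hX hY, Set.inter_eq_self_of_subset_left hXY]
    · rw [← ρ.p_inter Y X hY hX, Set.inter_eq_self_of_subset_right hXY]
  have pdisj : ∀ (X Y : Set V), G.memE X → G.memE Y → X ∩ Y = ∅ →
      ρ.p X * ρ.p Y = 0 := by
    intro X Y hX hY hXY
    rw [← ρ.p_inter X Y hX hY, hXY, ρ.p_empty]
  -- disjointification of the cover
  set Bs : Fin m → Set V := fun i => A ∩ G.rel g (δ i) with hBs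
  have hBsE : ∀ i, G.memE (Bs i) := fun i =>
    hA.inter (LabeledGraph.memE.relRange (δ i) (hδne i) hg)
  set D : Fin m → Set V := fun i =>
    Bs i \ ⋃ j ∈ Finset.univ.filter (fun j : Fin m => j < i), Bs j with hD
  have hDE : ∀ i, G.memE (D i) := fun i =>
    (hBsE i).diff (G.memE_finsetBiUnion _ _ (fun j _ => hBsE j))
  have hDBs : ∀ i, D i ⊆ Bs i := fun i => Set.diff_subset
  have hDA : ∀ i, D i ⊆ A := fun i => (hDBs i).trans Set.inter_subset_left
  have hDrel : ∀ i, D i ⊆ G.rel g (δ i) := fun i => (hDBs i).trans Set.inter_subset_right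
  have hDrng : ∀ i, D i ⊆ G.range' (δ i) := fun i =>
    (hDrel i).trans (G.rel_subset_range' _ _)
  have hkey : ∀ i j : Fin m, i < j → D i ∩ D j = ∅ := by
    intro i j hij
    rw [Set.eq_empty_iff_forall_notMem]
    rintro x ⟨hxi, hxj⟩
    exact hxj.2 (Set.mem_biUnion (Finset.mem_filter.mpr ⟨Finset.mem_univ i, hij⟩) hxi.1)
  have hdisj : ∀ i j : Fin m, i ≠ j → D i ∩ D j = ∅ := by
    intro i j hij
    rcases lt_or_gt_of_ne hij with h | h
    · exact hkey i j h
    · rw [Set.inter_comm]; exact hkey j i h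
  have hDU : (⋃ i, D i) = A := by
    apply Set.Subset.antisymm
    · exact Set.iUnion_subset hDA
    · intro x hx
      obtain ⟨i, hi⟩ := Set.mem_iUnion.mp (hcover hx)
      have hFne : (Finset.univ.filter (fun j : Fin m => x ∈ Bs j)).Nonempty :=
        ⟨i, Finset.mem_filter.mpr ⟨Finset.mem_univ i, ⟨hx, hi⟩⟩⟩
      set F := Finset.univ.filter (fun j : Fin m => x ∈ Bs j) with hF
      set i₀ := F.min' hFne with hi₀
      refine Set.mem_iUnion.mpr ⟨i₀, ?_, ?_⟩
      · exact (Finset.mem_filter.mp (F.min'_mem hFne)).2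
      · intro hmem
        obtain ⟨j, hjmem, hxj⟩ := Set.mem_iUnion₂.mp hmem
        have hjlt : j < i₀ := (Finset.mem_filter.mp hjmem).2
        have hjF : j ∈ F := Finset.mem_filter.mpr ⟨Finset.mem_univ j, hxj⟩
        exact absurd (F.min'_le j hjF) (not_le.mpr hjlt)
  -- the partial isometry
  set w : B := ∑ i, ρ.sWord (δ i) * ρ.p (D i) with hw
  have hstarw : star w = ∑ i, ρ.p (D i) * star (ρ.sWord (δ i)) := by
    rw [hw, star_sum]
    refine Finset.sum_congr rfl fun i _ => ?_
    rw [star_mul, (pproj _ (hDE i)).1.star_eq]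
  have hterm1 : ∀ i j : Fin m,
      (ρ.p (D i) * star (ρ.sWord (δ i))) * (ρ.sWord (δ j) * ρ.p (D j))
        = if i = j then ρ.p (D i) else 0 := by
    intro i j
    rcases eq_or_ne i j with rfl | hne
    · rw [if_pos rfl]
      have hmid : star (ρ.sWord (δ i)) * ρ.sWord (δ i) = ρ.p (G.range' (δ i)) :=
        LabeledGraph.star_sWord_mul G ρ (δ i) (hδne i)
      have hrngE : G.memE (G.range' (δ i)) := LabeledGraph.memE.range (δ i) (hδne i)
      calc (ρ.p (D i) * star (ρ.sWord (δ i))) * (ρ.sWord (δ i) * ρ.p (D i))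
          = ρ.p (D i) * (star (ρ.sWord (δ i)) * ρ.sWord (δ i)) * ρ.p (D i) := by
            simp only [mul_assoc]
        _ = ρ.p (D i) * ρ.p (G.range' (δ i)) * ρ.p (D i) := by rw [hmid]
        _ = ρ.p (D i) * ρ.p (D i) := by
            rw [(pabsorb _ _ (hDE i) hrngE (hDrng i)).1]
        _ = ρ.p (D i) := ρ.p_idem _ (hDE i)
    · rw [if_neg hne]
      calc (ρ.p (D i) * star (ρ.sWord (δ i))) * (ρ.sWord (δ j) * ρ.p (D j))
          = ρ.p (D i) * (star (ρ.sWord (δ i)) * ρ.sWord (δ j)) * ρ.p (D j) := by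
            simp only [mul_assoc]
        _ = 0 := by rw [horth i j hne, mul_zero, zero_mul]
  have hww : star w * w = ρ.p A := by
    rw [hstarw, hw, Finset.sum_mul_sum]
    have h1 : ∀ i : Fin m,
        ∑ j, (ρ.p (D i) * star (ρ.sWord (δ i))) * (ρ.sWord (δ j) * ρ.p (D j))
          = ρ.p (D i) := by
      intro i
      rw [Finset.sum_congr rfl fun j _ => hterm1 i j]
      simp
    rw [Finset.sum_congr rfl fun i _ => h1 i, ← G.p_iUnion_disjoint ρ D hDE hdisj, hDU]
  have hterm2 : ∀ i j : Fin m,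
      (ρ.sWord (δ i) * ρ.p (D i)) * (ρ.p (D j) * star (ρ.sWord (δ j)))
        = if i = j then ρ.sWord (δ i) * ρ.p (D i) * star (ρ.sWord (δ i)) else 0 := by
    intro i j
    rcases eq_or_ne i j with rfl | hne
    · rw [if_pos rfl]
      calc (ρ.sWord (δ i) * ρ.p (D i)) * (ρ.p (D i) * star (ρ.sWord (δ i)))
          = ρ.sWord (δ i) * ((ρ.p (D i) * ρ.p (D i)) * star (ρ.sWord (δ i))) := by
            simp only [mul_assoc]
        _ = ρ.sWord (δ i) * ρ.p (D i) * star (ρ.sWord (δ i)) := by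
            rw [ρ.p_idem _ (hDE i), mul_assoc]
    · rw [if_neg hne]
      calc (ρ.sWord (δ i) * ρ.p (D i)) * (ρ.p (D j) * star (ρ.sWord (δ j)))
          = ρ.sWord (δ i) * ((ρ.p (D i) * ρ.p (D j)) * star (ρ.sWord (δ j))) := by
            simp only [mul_assoc]
        _ = 0 := by rw [pdisj _ _ (hDE i) (hDE j) (hdisj i j hne), zero_mul, mul_zero]
  have hq : w * star w = ∑ i, ρ.sWord (δ i) * ρ.p (D i) * star (ρ.sWord (δ i)) := by
    rw [hw, hstarw, Finset.sum_mul_sum]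
    refine Finset.sum_congr rfl fun i _ => ?_
    rw [Finset.sum_congr rfl fun j _ => hterm2 i j]
    simp
  have hPproj : IsProjectionElem (ρ.p g) := pproj g hg
  have hPq : ρ.p g * (w * star w) = w * star w := by
    rw [hq, Finset.mul_sum]
    refine Finset.sum_congr rfl fun i _ => ?_
    calc ρ.p g * (ρ.sWord (δ i) * ρ.p (D i) * star (ρ.sWord (δ i)))
        = (ρ.p g * ρ.sWord (δ i)) * (ρ.p (D i) * star (ρ.sWord (δ i))) := by
          simp only [mul_assoc]
      _ = (ρ.sWord (δ i) * ρ.p (G.rel g (δ i))) * (ρ.p (D i) * star (ρ.sWord (δ i))) := by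
          rw [LabeledGraph.p_mul_sWord G ρ (δ i) (hδne i) g hg]
      _ = ρ.sWord (δ i) * ((ρ.p (G.rel g (δ i)) * ρ.p (D i)) * star (ρ.sWord (δ i))) := by
          simp only [mul_assoc]
      _ = ρ.sWord (δ i) * (ρ.p (D i) * star (ρ.sWord (δ i))) := by
          rw [(pabsorb _ _ (hDE i) (LabeledGraph.memE.relRange (δ i) (hδne i) hg) (hDrel i)).2]
      _ = ρ.sWord (δ i) * ρ.p (D i) * star (ρ.sWord (δ i)) := by rw [mul_assoc]
  have hwpA : w * ρ.p A = w := by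
    rw [hw, Finset.sum_mul]
    refine Finset.sum_congr rfl fun i _ => ?_
    rw [mul_assoc, (pabsorb _ _ (hDE i) hA (hDA i)).1]
  have hqsa : star (w * star w) = w * star w := by rw [star_mul, star_star]
  have hq2 : (w * star w) * (w * star w) = w * star w := by
    calc (w * star w) * (w * star w) = w * ((star w * w) * star w) := by
          simp only [mul_assoc]
      _ = w * (ρ.p A * star w) := by rw [hww]
      _ = (w * ρ.p A) * star w := by rw [mul_assoc]
      _ = w * star w := by rw [hwpA]
  have hqP : (w * star w) * ρ.p g = w * star w := by
    have h := congrArg star hPq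
    rwa [star_mul, hqsa, hPproj.1.star_eq] at h
  have hqle : w * star w ≤ ρ.p g := by
    have hdiffproj : (ρ.p g - w * star w) * (ρ.p g - w * star w)
        = ρ.p g - w * star w := by
      simp only [mul_sub, sub_mul, hPproj.2, hq2, hPq, hqP]
      abel
    have hdiffsa : star (ρ.p g - w * star w) = ρ.p g - w * star w := by
      rw [star_sub, hPproj.1.star_eq, hqsa]
    have hnn : 0 ≤ ρ.p g - w * star w := by
      calc (0 : B) ≤ star (ρ.p g - w * star w) * (ρ.p g - w * star w) :=
            star_mul_self_nonneg _
        _ = ρ.p g - w * star w := by rw [hdiffsa, hdiffproj]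
    exact sub_nonneg.mp hnn
  refine ⟨⟨w, hww, hqle⟩, ?_⟩
  intro hinf
  have hqinf : IsInfiniteProjection (w * star w) := infinite_of_mvn hinf hww rfl
  exact infinite_of_le hqinf hPproj hqle
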